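/- Let $N$ be a Nijenhuis operator on a left-symmetric conformal algebra $A$. Then the bilinear map $\omega_\lambda(a,b) = N(a)_\lambda b + a_\lambda N(b) - N(a_\lambda b)$ generates a linear deformation of $A$ (i.e., $a_\lambda b + t\omega_\lambda(a,b)$ is a left-symmetric conformal product), and this deformation is trivial: $T_t = \mathrm{id} + tN$ is a left-symmetric conformal algebra homomorphism from $(A, \cdot^\omega)$ to $A$. -/
import Mathlib


/- Encoding conventions.
A `ℂ[∂]`-module is encoded as a complex vector space `A` together with an
endomorphism `D : Module.End ℂ A` (the action of `∂`).
A polynomial `Σ cₙ λⁿ ∈ A[λ]` is encoded by its coefficient family `ℕ →₀ A`,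
and `ev l p` is its evaluation at `λ = l`.  Since `ℂ` is infinite, a polynomial
identity in the formal variables `λ, μ, …` is equivalent to the corresponding
family of identities for all complex values of the variables, which is how all
axioms are stated below.
A `λ`-product `a ⊗ b ↦ a_λ b ∈ A[λ]` is encoded as `mul : A → A → (ℕ →₀ A)`
(the coefficients of `a_λ b`), its evaluation at `λ = l` being `ev l (mul a b)`.
`substNeg D p` is the result of substituting the variable of `p` by `-∂-λ`:
it is again a polynomial in `λ` with coefficients `ℕ →₀ A`, so that
`b_{-∂-λ} a` is encoded as `substNeg D (mul b a)` (as a polynomial in `λ`). -/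

namespace LSCpaper

open Finsupp

variable {A M V : Type*} [AddCommGroup A] [Module ℂ A] [AddCommGroup M] [Module ℂ M]
  [AddCommGroup V] [Module ℂ V]

/-- Evaluation of a polynomial with coefficients in `V` at a complex number. -/
noncomputable def ev (l : ℂ) (p : ℕ →₀ V) : V := p.sum fun n c => l ^ n • c

/-- Substitution of `-∂ - λ` for the variable of `p`; the result is the
coefficient family (in `λ`) of the resulting polynomial. -/
noncomputable def substNeg (D : Module.End ℂ A) (p : ℕ →₀ A) : ℕ →₀ A :=
  p.sum fun i c => ∑ k ∈ Finset.range (i + 1),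
    Finsupp.single k ((((-1 : ℂ) ^ k * (i.choose k : ℂ))) • ((-D) ^ (i - k)) c)

/-- `ℂ`-bilinearity of a `λ`-product. -/
def Bilin (f : A → M → ℕ →₀ V) : Prop :=
  (∀ a a' b, f (a + a') b = f a b + f a' b) ∧
  (∀ (r : ℂ) (a : A) (b : M), f (r • a) b = r • f a b) ∧
  (∀ a b b', f a (b + b') = f a b + f a b') ∧
  (∀ (r : ℂ) (a : A) (b : M), f a (r • b) = r • f a b)

/-- `A` with `∂`-action `D` and `λ`-product `mul` is a left-symmetric conformal
algebra. -/
structure IsLSC (D : Module.End ℂ A) (mul : A → A → ℕ →₀ A) : Prop where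
  bilin : Bilin mul
  sesq1 : ∀ (l : ℂ) (a b : A), ev l (mul (D a) b) = (-l) • ev l (mul a b)
  sesq2 : ∀ (l : ℂ) (a b : A), ev l (mul a (D b)) = D (ev l (mul a b)) + l • ev l (mul a b)
  lsym : ∀ (l m : ℂ) (a b c : A),
    ev (l + m) (mul (ev l (mul a b)) c) - ev l (mul a (ev m (mul b c))) =
      ev (l + m) (mul (ev m (mul b a)) c) - ev m (mul b (ev l (mul a c)))

/-- `A` with `∂`-action `D` and `λ`-bracket `br` is a Lie conformal algebra. -/
structure IsLieConf (D : Module.End ℂ A) (br : A → A → ℕ →₀ A) : Prop where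
  bilin : Bilin br
  sesq1 : ∀ (l : ℂ) (a b : A), ev l (br (D a) b) = (-l) • ev l (br a b)
  sesq2 : ∀ (l : ℂ) (a b : A), ev l (br a (D b)) = D (ev l (br a b)) + l • ev l (br a b)
  skew : ∀ (l : ℂ) (a b : A), ev l (br a b) = - ev l (substNeg D (br b a))
  jacobi : ∀ (l m : ℂ) (a b c : A),
    ev l (br a (ev m (br b c))) =
      ev (l + m) (br (ev l (br a b)) c) + ev m (br b (ev l (br a c)))

/-- The evaluated bracket `[a_λ b] = a_λ b - b_{-∂-λ} a` of the sub-adjacent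
Lie conformal algebra. -/
noncomputable def brEv (D : Module.End ℂ A) (mul : A → A → ℕ →₀ A) (l : ℂ) (a b : A) : A :=
  ev l (mul a b) - ev l (substNeg D (mul b a))

end LSCpaper

namespace LSCpaper

variable {A : Type*} [AddCommGroup A] [Module ℂ A]

/-- The deformed product `a ·^N_λ b = N(a)_λ b + a_λ N(b) - N(a_λ b)`
associated with a `ℂ[∂]`-module endomorphism `N`. -/
noncomputable def mulN (D : Module.End ℂ A) (N : A →ₗ[ℂ] A)
    (mul : A → A → ℕ →₀ A) (a b : A) : ℕ →₀ A :=
  mul (N a) b + mul a (N b) - Finsupp.mapRange (⇑N) (map_zero N) (mul a b)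

/-- `N` is a Nijenhuis operator on the left-symmetric conformal algebra
`(A, D, mul)`: `N(a)_λ N(b) = N(a ·^N_λ b)`. -/
def IsNijenhuis (D : Module.End ℂ A) (N : A →ₗ[ℂ] A) (mul : A → A → ℕ →₀ A) : Prop :=
  ∀ (l : ℂ) (a b : A), ev l (mul (N a) (N b)) = N (ev l (mulN D N mul a b))

end LSCpaper

namespace LSCpaper


section Aux

variable {A : Type*} [AddCommGroup A] [Module ℂ A]

lemma ev_add' (l : ℂ) (p q : ℕ →₀ A) : ev l (p + q) = ev l p + ev l q :=
  Finsupp.sum_add_index' (fun _ => smul_zero _) (fun _ _ _ => smul_add _ _ _)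

lemma ev_smul' (l r : ℂ) (p : ℕ →₀ A) : ev l (r • p) = r • ev l p := by
  unfold ev
  rw [Finsupp.sum_smul_index' (fun _ => smul_zero _), Finsupp.smul_sum]
  exact Finsupp.sum_congr fun n _ => smul_comm _ _ _

lemma ev_neg' (l : ℂ) (p : ℕ →₀ A) : ev l (-p) = - ev l p := by
  rw [← neg_one_smul ℂ p, ev_smul', neg_one_smul]

lemma ev_sub' (l : ℂ) (p q : ℕ →₀ A) : ev l (p - q) = ev l p - ev l q := by
  rw [sub_eq_add_neg, ev_add', ev_neg', sub_eq_add_neg]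

lemma ev_mapRange' (l : ℂ) (N : A →ₗ[ℂ] A) (p : ℕ →₀ A) :
    ev l (Finsupp.mapRange (⇑N) (map_zero N) p) = N (ev l p) := by
  unfold ev
  rw [Finsupp.sum_mapRange_index (fun _ => smul_zero _), map_finsuppSum]
  exact Finsupp.sum_congr fun n _ => (map_smul N _ _).symm

lemma threept (N : A →ₗ[ℂ] A) {q1 q2 : A}
    (h : ∀ s : ℂ, (s • q1 + s ^ 2 • q2) + s • N (s • q1 + s ^ 2 • q2) = 0) :
    q1 = 0 ∧ q2 = 0 := by
  have h' : ∀ s : ℂ, s • q1 + s ^ 2 • (q2 + N q1) + s ^ 3 • N q2 = 0 := by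
    intro s
    have hs := h s
    rw [map_add, map_smul, map_smul] at hs
    linear_combination (norm := module) hs
  have e1 := h' 1
  have e2 := h' (-1)
  have e3 := h' 2
  have hv2 : (2 : ℂ) • (q2 + N q1) = 0 := by
    linear_combination (norm := module) e1 + e2
  have hv2' : q2 + N q1 = 0 := by
    rcases smul_eq_zero.mp hv2 with h | h
    · exact absurd h two_ne_zero
    · exact h
  have hv13 : q1 + N q2 = 0 := by
    linear_combination (norm := module) e1 - hv2'
  have h6 : (6 : ℂ) • N q2 = 0 := by
    have t1 : (2 : ℂ) • (q1 + N q2) = 0 := by rw [hv13, smul_zero]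
    have t2 : (4 : ℂ) • (q2 + N q1) = 0 := by rw [hv2', smul_zero]
    linear_combination (norm := module) e3 - t1 - t2
  have hv3 : N q2 = 0 := by
    rcases smul_eq_zero.mp h6 with h | h
    · norm_num at h
    · exact h
  have hq1 : q1 = 0 := by
    have := hv13; rw [hv3, add_zero] at this; exact this
  have hq2 : q2 = 0 := by
    have := hv2'; rw [hq1, map_zero, add_zero] at this; exact this
  exact ⟨hq1, hq2⟩

/-- outer product `f`, inner product `g` left-symmetry mixed expression. -/
noncomputable def mixTerm (f g : A → A → ℕ →₀ A) (l m : ℂ) (a b c : A) : A :=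
  (ev (l + m) (f (ev l (g a b)) c) - ev l (f a (ev m (g b c)))) -
    (ev (l + m) (f (ev m (g b a)) c) - ev m (f b (ev l (g a c))))

end Aux

/-- Let `N` be a Nijenhuis operator on a left-symmetric
conformal algebra `A`.  Then `ω_λ(a,b) = N(a)_λ b + a_λ N(b) - N(a_λ b)`
generates a linear deformation of `A` (i.e. `a_λ b + t ω_λ(a,b)` is a
left-symmetric conformal product for every value of `t`), and the deformation
is trivial: `T_t = id + t N` is a left-symmetric conformal algebra
homomorphism from the deformed algebra `(A, ·^ω)` to `A`. -/
theorem nijenhuis_trivial_deformation {A : Type*} [AddCommGroup A] [Module ℂ A]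
    (D : Module.End ℂ A) (N : A →ₗ[ℂ] A) (mul : A → A → ℕ →₀ A)
    (hA : IsLSC D mul) (hND : ∀ a, N (D a) = D (N a))
    (hN : IsNijenhuis D N mul) :
    (∀ t : ℂ, IsLSC D (fun a b => mul a b + t • mulN D N mul a b)) ∧
      (∀ (t l : ℂ) (a b : A),
        ev l (mul a b + t • mulN D N mul a b)
            + t • N (ev l (mul a b + t • mulN D N mul a b)) =
          ev l (mul (a + t • N a) (b + t • N b))) := by
  obtain ⟨hmadd, hmsmul, hmaddR, hmsmulR⟩ := hA.bilin
  -- evaluation of the deformation 2-cocycle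
  have hev : ∀ (l : ℂ) (a b : A), ev l (mulN D N mul a b)
      = ev l (mul (N a) b) + ev l (mul a (N b)) - N (ev l (mul a b)) := by
    intro l a b
    unfold mulN
    rw [ev_sub', ev_add', ev_mapRange']
  -- bilinearity of `mulN`
  have hwadd : ∀ a a' b, mulN D N mul (a + a') b = mulN D N mul a b + mulN D N mul a' b := by
    intro a a' b
    unfold mulN
    rw [map_add, hmadd, hmadd, hmadd, Finsupp.mapRange_add (fun x y => map_add N x y)]
    abel
  have hwsmul : ∀ (r : ℂ) (a b : A), mulN D N mul (r • a) b = r • mulN D N mul a b := by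
    intro r a b
    unfold mulN
    rw [map_smul, hmsmul, hmsmul, hmsmul,
      Finsupp.mapRange_smul r _ (fun x => map_smul N r x)]
    module
  have hwaddR : ∀ a b b', mulN D N mul a (b + b') = mulN D N mul a b + mulN D N mul a b' := by
    intro a b b'
    unfold mulN
    rw [map_add, hmaddR, hmaddR, hmaddR, Finsupp.mapRange_add (fun x y => map_add N x y)]
    abel
  have hwsmulR : ∀ (r : ℂ) (a b : A), mulN D N mul a (r • b) = r • mulN D N mul a b := by
    intro r a b
    unfold mulN
    rw [map_smul, hmsmulR, hmsmulR, hmsmulR,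
      Finsupp.mapRange_smul r _ (fun x => map_smul N r x)]
    module
  -- Nijenhuis condition, expanded
  have hN' : ∀ (l : ℂ) (a b : A), ev l (mul (N a) (N b)) =
      N (ev l (mul (N a) b)) + N (ev l (mul a (N b))) - N (N (ev l (mul a b))) := by
    intro l a b
    rw [hN l a b, hev, map_sub, map_add]
  -- the homomorphism property of `id + t N` (second assertion)
  have key : ∀ (t l : ℂ) (a b : A),
      ev l (mul a b + t • mulN D N mul a b)
          + t • N (ev l (mul a b + t • mulN D N mul a b)) =
        ev l (mul (a + t • N a) (b + t • N b)) := by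
    intro t l a b
    have h := hN' l a b
    simp only [ev_add', ev_smul', hev, hmadd, hmaddR, hmsmul, hmsmulR,
      map_add, map_sub, map_smul]
    rw [h]
    module
  refine ⟨?_, key⟩
  intro t
  -- sesquilinearity of `mulN`
  have hw1 : ∀ (l : ℂ) (a b : A),
      ev l (mulN D N mul (D a) b) = (-l) • ev l (mulN D N mul a b) := by
    intro l a b
    rw [hev, hev, hND, hA.sesq1, hA.sesq1, hA.sesq1, map_smul]
    module
  have hw2 : ∀ (l : ℂ) (a b : A),
      ev l (mulN D N mul a (D b)) =
        D (ev l (mulN D N mul a b)) + l • ev l (mulN D N mul a b) := by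
    intro l a b
    simp only [hev, hND, hA.sesq2, map_add, map_sub, map_smul, hND]
    module
  refine ⟨⟨?_, ?_, ?_, ?_⟩, ?_, ?_, ?_⟩
  · intro a a' b
    simp only [hmadd, hwadd, smul_add]
    abel
  · intro r a b
    simp only [hmsmul, hwsmul]
    module
  · intro a b b'
    simp only [hmaddR, hwaddR, smul_add]
    abel
  · intro r a b
    simp only [hmsmulR, hwsmulR]
    module
  · intro l a b
    simp only [ev_add', ev_smul', hA.sesq1, hw1]
    module
  · intro l a b
    simp only [ev_add', ev_smul', hA.sesq2, hw2, map_add, map_smul]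
    module
  · -- left-symmetry of the deformed product
    intro l m a b c
    -- expansion helpers
    have hL0 : ∀ (l' s : ℂ) (x y z : A),
        ev l' (mul (x + s • y) z) = ev l' (mul x z) + s • ev l' (mul y z) := by
      intro l' s x y z
      rw [hmadd, hmsmul, ev_add', ev_smul']
    have hR0 : ∀ (l' s : ℂ) (x y z : A),
        ev l' (mul x (y + s • z)) = ev l' (mul x y) + s • ev l' (mul x z) := by
      intro l' s x y z
      rw [hmaddR, hmsmulR, ev_add', ev_smul']
    have hL1 : ∀ (l' s : ℂ) (x y z : A),
        ev l' (mulN D N mul (x + s • y) z) =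
          ev l' (mulN D N mul x z) + s • ev l' (mulN D N mul y z) := by
      intro l' s x y z
      rw [hwadd, hwsmul, ev_add', ev_smul']
    have hR1 : ∀ (l' s : ℂ) (x y z : A),
        ev l' (mulN D N mul x (y + s • z)) =
          ev l' (mulN D N mul x y) + s • ev l' (mulN D N mul x z) := by
      intro l' s x y z
      rw [hwaddR, hwsmulR, ev_add', ev_smul']
    -- decomposition of the deformed lsym expression in powers of the parameter
    have hexp : ∀ s : ℂ,
        mixTerm (fun x y => mul x y + s • mulN D N mul x y)
            (fun x y => mul x y + s • mulN D N mul x y) l m a b c =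
          mixTerm mul mul l m a b c
            + s • (mixTerm mul (mulN D N mul) l m a b c
                + mixTerm (mulN D N mul) mul l m a b c)
            + s ^ 2 • mixTerm (mulN D N mul) (mulN D N mul) l m a b c := by
      intro s
      unfold mixTerm
      simp only [ev_add', ev_smul', hL0, hR0, hL1, hR1]
      module
    -- the deformed lsym expression is killed by `id + s N`
    have hTT : ∀ s : ℂ,
        mixTerm (fun x y => mul x y + s • mulN D N mul x y)
            (fun x y => mul x y + s • mulN D N mul x y) l m a b c
          + s • N (mixTerm (fun x y => mul x y + s • mulN D N mul x y)
            (fun x y => mul x y + s • mulN D N mul x y) l m a b c) = 0 := by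
      intro s
      have k1 := key s l a b
      have k2 := key s m b c
      have k3 := key s m b a
      have k4 := key s l a c
      have K1 := key s (l + m) (ev l (mul a b + s • mulN D N mul a b)) c
      have K2 := key s l a (ev m (mul b c + s • mulN D N mul b c))
      have K3 := key s (l + m) (ev m (mul b a + s • mulN D N mul b a)) c
      have K4 := key s m b (ev l (mul a c + s • mulN D N mul a c))
      rw [k1] at K1
      rw [k2] at K2
      rw [k3] at K3
      rw [k4] at K4
      have hls := hA.lsym l m (a + s • N a) (b + s • N b) (c + s • N c)
      unfold mixTerm
      beta_reduce
      simp only [map_sub]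
      linear_combination (norm := module) K1 - K2 - K3 + K4 + hls
    -- the degree-zero part vanishes by left-symmetry of `mul`
    have h0 : mixTerm mul mul l m a b c = 0 := by
      unfold mixTerm
      exact sub_eq_zero.mpr (hA.lsym l m a b c)
    -- hence the two higher coefficients vanish
    have hpoly : ∀ s : ℂ,
        (s • (mixTerm mul (mulN D N mul) l m a b c + mixTerm (mulN D N mul) mul l m a b c)
            + s ^ 2 • mixTerm (mulN D N mul) (mulN D N mul) l m a b c)
          + s • N (s • (mixTerm mul (mulN D N mul) l m a b c
                + mixTerm (mulN D N mul) mul l m a b c)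
            + s ^ 2 • mixTerm (mulN D N mul) (mulN D N mul) l m a b c) = 0 := by
      intro s
      have e := hTT s
      rw [hexp s, h0, zero_add] at e
      exact e
    obtain ⟨hq1, hq2⟩ := threept N hpoly
    have hfin : mixTerm (fun x y => mul x y + t • mulN D N mul x y)
        (fun x y => mul x y + t • mulN D N mul x y) l m a b c = 0 := by
      rw [hexp t, h0, hq1, hq2, smul_zero, smul_zero, add_zero, add_zero]
    exact sub_eq_zero.mp hfin

end LSCpaper
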